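/- Let G be a fixed (deterministic) real n×n matrix and H a fixed real n×r matrix. Then E[tr(Hᵗ YᵗY G Gᵗ YᵗY H)] = q · tr(Σ G Gᵗ) · tr(Σ H Hᵗ) + q(q + 1) · tr(Σ G Gᵗ Σ H Hᵗ). -/

import Mathlib

open MeasureTheory ProbabilityTheory Matrix Filter

instance matrixMeasurableSpace {m n : ℕ} : MeasurableSpace (Matrix (Fin m) (Fin n) ℝ) :=
  inferInstanceAs (MeasurableSpace (Fin m → Fin n → ℝ))

/-- Law of a `p × n` random matrix with i.i.d. standard Gaussian entries. -/
noncomputable def stdGaussianMatrix (p n : ℕ) : Measure (Matrix (Fin p) (Fin n) ℝ) :=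
  Measure.pi (fun _ : Fin p => Measure.pi (fun _ : Fin n => gaussianReal 0 1))

/-- Law of a `p × n` random matrix whose rows are i.i.d. mean-zero Gaussian vectors
with covariance `S` (realized as standard Gaussian matrix times the square root of `S`). -/
noncomputable def gaussianRowsMatrix (p n : ℕ) (S : Matrix (Fin n) (Fin n) ℝ)
    (hS : S.PosDef) : Measure (Matrix (Fin p) (Fin n) ℝ) :=
  (stdGaussianMatrix p n).map (fun Z => Z * ((hS.posSemidef.1.eigenvectorUnitary : Matrix (Fin n) (Fin n) ℝ) *
    diagonal (Real.sqrt ∘ hS.posSemidef.1.eigenvalues) *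
    (star hS.posSemidef.1.eigenvectorUnitary : Matrix (Fin n) (Fin n) ℝ)))

section Aux
open Real
open scoped NNReal ENNReal


lemma integrable_pow_gauss (m : ℕ) :
    Integrable (fun x : ℝ => x ^ m * Real.exp (-(2⁻¹ : ℝ) * x ^ 2)) := by
  have h := integrable_rpow_mul_exp_neg_mul_sq (by norm_num : (0:ℝ) < 2⁻¹)
      (s := (m : ℝ)) ((by norm_num : (-1:ℝ) < 0).trans_le (Nat.cast_nonneg m))
  simpa [Real.rpow_natCast] using h

lemma tendsto_pow_gauss_atTop (m : ℕ) :
    Tendsto (fun x : ℝ => x ^ m * Real.exp (-(2⁻¹ : ℝ) * x ^ 2)) atTop (nhds 0) := by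
  have h := rpow_mul_exp_neg_mul_sq_isLittleO_exp_neg (by norm_num : (0:ℝ) < 2⁻¹) (m : ℝ)
  have h2 : Tendsto (fun x : ℝ => Real.exp (-(1/2 : ℝ) * x)) atTop (nhds 0) := by
    have h3 : Tendsto (fun x : ℝ => -(1/2:ℝ) * x) atTop atBot :=
      Tendsto.const_mul_atTop_of_neg (by norm_num) tendsto_id
    exact Real.tendsto_exp_atBot.comp h3
  have := h.isBigO.trans_tendsto h2
  simpa [Real.rpow_natCast] using this

lemma tendsto_pow_gauss_atBot (m : ℕ) :
    Tendsto (fun x : ℝ => x ^ m * Real.exp (-(2⁻¹ : ℝ) * x ^ 2)) atBot (nhds 0) := by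
  have h : Tendsto (fun x : ℝ => (-x) ^ m * Real.exp (-(2⁻¹ : ℝ) * (-x) ^ 2)) atTop (nhds 0) := by
    have h0 := (tendsto_pow_gauss_atTop m).const_mul ((-1 : ℝ) ^ m)
    rw [mul_zero] at h0
    refine h0.congr fun x => ?_
    rw [neg_pow, neg_sq]
    ring
  have h2 := h.comp tendsto_neg_atBot_atTop
  refine h2.congr fun x => ?_
  simp [Function.comp]

noncomputable def EE (k : ℕ) : ℝ := ∫ x : ℝ, x ^ k * Real.exp (-(2⁻¹ : ℝ) * x ^ 2)

lemma hasDerivAt_gauss_aux (k : ℕ) (x : ℝ) :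
    HasDerivAt (fun x : ℝ => -(x ^ (k+1) * Real.exp (-(2⁻¹:ℝ) * x ^ 2)))
      (x ^ (k+2) * Real.exp (-(2⁻¹:ℝ) * x ^ 2)
        - ((k:ℝ)+1) * (x ^ k * Real.exp (-(2⁻¹:ℝ) * x ^ 2))) x := by
  have h1 : HasDerivAt (fun x : ℝ => -(2⁻¹:ℝ) * x ^ 2) (-(2⁻¹:ℝ) * (2 * x ^ 1)) x :=
    (hasDerivAt_pow 2 x).const_mul _
  have h2 := h1.exp
  have h3 : HasDerivAt (fun x : ℝ => -(x ^ (k+1) * Real.exp (-(2⁻¹:ℝ) * x ^ 2))) _ x :=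
    ((hasDerivAt_pow (k+1) x).mul h2).neg
  convert h3 using 1
  push_cast
  ring

lemma EE_rec (k : ℕ) : EE (k + 2) = ((k : ℝ) + 1) * EE k := by
  have h := integral_of_hasDerivAt_of_tendsto (hasDerivAt_gauss_aux k)
    ((integrable_pow_gauss (k+2)).sub ((integrable_pow_gauss k).const_mul _))
    ((tendsto_pow_gauss_atBot (k+1)).neg) ((tendsto_pow_gauss_atTop (k+1)).neg)
  simp only [neg_zero, sub_zero] at h
  have h2 := integral_sub (integrable_pow_gauss (k+2)) ((integrable_pow_gauss k).const_mul (((k:ℝ)+1)))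
  rw [h2] at h
  have : ∫ x : ℝ, ((k:ℝ)+1) * (x ^ k * Real.exp (-(2⁻¹:ℝ) * x ^ 2)) = ((k:ℝ)+1) * EE k :=
    integral_const_mul _ _
  rw [this] at h
  have : EE (k+2) - ((k:ℝ)+1) * EE k = 0 := h
  linarith

lemma EE_zero : EE 0 = Real.sqrt (2 * π) := by
  have := integral_gaussian (2⁻¹ : ℝ)
  simp only [EE, pow_zero, one_mul]
  rw [this]
  rw [show (π / 2⁻¹ : ℝ) = 2 * π by ring]

lemma EE_one : EE 1 = 0 := by
  have hd : ∀ x : ℝ, HasDerivAt (fun x : ℝ => -(Real.exp (-(2⁻¹:ℝ) * x ^ 2)))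
      (x ^ 1 * Real.exp (-(2⁻¹:ℝ) * x ^ 2)) x := by
    intro x
    have h1 : HasDerivAt (fun x : ℝ => -(2⁻¹:ℝ) * x ^ 2) (-(2⁻¹:ℝ) * (2 * x ^ 1)) x :=
      (hasDerivAt_pow 2 x).const_mul _
    have h2 : HasDerivAt (fun x : ℝ => -(Real.exp (-(2⁻¹:ℝ) * x ^ 2))) _ x := h1.exp.neg
    convert h2 using 1
    ring
  have h := integral_of_hasDerivAt_of_tendsto hd (integrable_pow_gauss 1)
    ((tendsto_pow_gauss_atBot 0).neg.congr (by simp)) ((tendsto_pow_gauss_atTop 0).neg.congr (by simp))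
  simpa [EE] using h

lemma EE_two : EE 2 = Real.sqrt (2 * π) := by
  have := EE_rec 0
  simp [this, EE_zero]

lemma EE_three : EE 3 = 0 := by
  have := EE_rec 1
  simp [this, EE_one]

lemma EE_four : EE 4 = 3 * Real.sqrt (2 * π) := by
  have := EE_rec 2
  rw [this, EE_two]
  norm_num

lemma sqrt_two_pi_pos : (0:ℝ) < Real.sqrt (2 * π) :=
  Real.sqrt_pos.2 (by positivity)

lemma gaussianPDFReal_std (x : ℝ) :
    gaussianPDFReal 0 1 x = (Real.sqrt (2 * π))⁻¹ * Real.exp (-(2⁻¹:ℝ) * x ^ 2) := by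
  rw [gaussianPDFReal_def]
  show (Real.sqrt (2*π*((1:ℝ≥0):ℝ)))⁻¹ * Real.exp (-(x - 0)^2/(2*((1:ℝ≥0):ℝ))) = _
  rw [show -(x - 0:ℝ)^2/(2*((1:ℝ≥0):ℝ)) = -(2⁻¹:ℝ)*x^2 by norm_num; ring]
  norm_num

lemma gauss_transfer (g : ℝ → ℝ) :
    ∫ x, g x ∂(gaussianReal 0 1)
      = (Real.sqrt (2*π))⁻¹ * ∫ x : ℝ, g x * Real.exp (-(2⁻¹:ℝ) * x ^ 2) := by
  rw [gaussianReal_of_var_ne_zero 0 one_ne_zero]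
  have hmeas : Measurable fun x => Real.toNNReal (gaussianPDFReal 0 1 x) :=
    (measurable_gaussianPDFReal 0 1).real_toNNReal
  have hpdf : gaussianPDF 0 1 = fun x => ((Real.toNNReal (gaussianPDFReal 0 1 x) : ℝ≥0) : ℝ≥0∞) := rfl
  rw [hpdf, integral_withDensity_eq_integral_smul hmeas]
  rw [← integral_const_mul]
  congr 1
  ext x
  rw [NNReal.smul_def, smul_eq_mul, Real.coe_toNNReal _ (gaussianPDFReal_nonneg 0 1 x), gaussianPDFReal_std]
  ring

lemma integrable_pow_gamma (m : ℕ) : Integrable (fun x : ℝ => x ^ m) (gaussianReal 0 1) := by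
  rw [gaussianReal_of_var_ne_zero 0 one_ne_zero]
  have hmeas : Measurable fun x => Real.toNNReal (gaussianPDFReal 0 1 x) :=
    (measurable_gaussianPDFReal 0 1).real_toNNReal
  have hpdf : gaussianPDF 0 1 = fun x => ((Real.toNNReal (gaussianPDFReal 0 1 x) : ℝ≥0) : ℝ≥0∞) := rfl
  rw [hpdf, integrable_withDensity_iff_integrable_smul hmeas]
  refine (((integrable_pow_gauss m).const_mul ((Real.sqrt (2*π))⁻¹)).congr ?_)
  filter_upwards with x
  rw [NNReal.smul_def, smul_eq_mul, Real.coe_toNNReal _ (gaussianPDFReal_nonneg 0 1 x), gaussianPDFReal_std]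
  ring

lemma mom_pow (m : ℕ) : ∫ x, x ^ m ∂(gaussianReal 0 1) = (Real.sqrt (2*π))⁻¹ * EE m :=
  gauss_transfer _

lemma mom0 : ∫ x, x ^ 0 ∂(gaussianReal 0 1) = 1 := by
  rw [mom_pow, EE_zero, inv_mul_cancel₀ sqrt_two_pi_pos.ne']

lemma mom1 : ∫ x, x ^ 1 ∂(gaussianReal 0 1) = 0 := by rw [mom_pow, EE_one, mul_zero]

lemma mom1' : ∫ x, x ∂(gaussianReal 0 1) = 0 := by simpa using mom1

lemma mom2 : ∫ x, x ^ 2 ∂(gaussianReal 0 1) = 1 := by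
  rw [mom_pow, EE_two, inv_mul_cancel₀ sqrt_two_pi_pos.ne']

lemma mom3 : ∫ x, x ^ 3 ∂(gaussianReal 0 1) = 0 := by rw [mom_pow, EE_three, mul_zero]

lemma mom4 : ∫ x, x ^ 4 ∂(gaussianReal 0 1) = 3 := by
  rw [mom_pow, EE_four, ← mul_assoc, mul_comm _ (3:ℝ), mul_assoc,
    inv_mul_cancel₀ sqrt_two_pi_pos.ne', mul_one]

section PiHelp
variable {ι : Type*} [Fintype ι] {E : Type*} [MeasurableSpace E] (μ : Measure E) [SigmaFinite μ]

lemma pi_integral_prod (f : ι → E → ℝ) :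
    ∫ x : ι → E, ∏ i, f i (x i) ∂(Measure.pi fun _ => μ) = ∏ i, ∫ x, f i x ∂μ := by
  letI : MeasureSpace E := ⟨μ⟩
  exact MeasureTheory.integral_fintype_prod_eq_prod f

lemma pi_integrable_prod {f : ι → E → ℝ} (hf : ∀ i, Integrable (f i) μ) :
    Integrable (fun x : ι → E => ∏ i, f i (x i)) (Measure.pi fun _ => μ) := by
  letI : MeasureSpace E := ⟨μ⟩
  exact MeasureTheory.Integrable.fintype_prod hf

end PiHelp

lemma key_prod {n : ℕ} (z : Fin n → ℝ) (a : Fin n) :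
    ∏ t, z t ^ (if a = t then 1 else 0) = z a := by
  calc ∏ t, z t ^ (if a = t then 1 else 0) = ∏ t, (if a = t then z t else 1) :=
        Finset.prod_congr rfl fun t _ => by split <;> simp
    _ = z a := by simp

lemma rep_two {n : ℕ} (z : Fin n → ℝ) (a b : Fin n) :
    z a * z b = ∏ t, z t ^ ((if a = t then 1 else 0) + (if b = t then 1 else 0)) := by
  simp only [pow_add, Finset.prod_mul_distrib, key_prod]

lemma rep_four {n : ℕ} (z : Fin n → ℝ) (a b c d : Fin n) :
    z a * z b * z c * z d = ∏ t, z t ^ ((if a = t then 1 else 0) + (if b = t then 1 else 0)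
      + (if c = t then 1 else 0) + (if d = t then 1 else 0)) := by
  simp only [pow_add, Finset.prod_mul_distrib, key_prod]

lemma integral_prod_pow {n : ℕ} (e : Fin n → ℕ) :
    ∫ z : Fin n → ℝ, ∏ t, z t ^ e t ∂(Measure.pi fun _ => gaussianReal 0 1)
      = ∏ t, ∫ x, x ^ e t ∂(gaussianReal 0 1) :=
  pi_integral_prod _ (fun t x => x ^ e t)

lemma integrable_prod_pow {n : ℕ} (e : Fin n → ℕ) :
    Integrable (fun z : Fin n → ℝ => ∏ t, z t ^ e t)
      (Measure.pi fun _ => gaussianReal 0 1) :=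
  pi_integrable_prod _ (fun i => integrable_pow_gamma (e i))

lemma integrable_nu_two {n : ℕ} (a b : Fin n) :
    Integrable (fun z : Fin n → ℝ => z a * z b) (Measure.pi fun _ => gaussianReal 0 1) := by
  simp only [rep_two]
  exact integrable_prod_pow _

lemma integrable_nu_four {n : ℕ} (a b c d : Fin n) :
    Integrable (fun z : Fin n → ℝ => z a * z b * z c * z d)
      (Measure.pi fun _ => gaussianReal 0 1) := by
  simp only [rep_four]
  exact integrable_prod_pow _

lemma nu_mom2 {n : ℕ} (a b : Fin n) :
    ∫ z : Fin n → ℝ, z a * z b ∂(Measure.pi fun _ => gaussianReal 0 1)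
      = if a = b then (1:ℝ) else 0 := by
  simp only [rep_two]
  rw [integral_prod_pow]
  by_cases hab : a = b
  · subst hab
    simp only [if_pos rfl]
    refine Finset.prod_eq_one fun t _ => ?_
    by_cases h : a = t <;> simp [h, mom2, mom0]
  · rw [if_neg hab]
    refine Finset.prod_eq_zero (Finset.mem_univ a) ?_
    simp [hab, (Ne.symm hab : ¬ b = a), mom1, mom1']

lemma nu_mom4 {n : ℕ} (a b c d : Fin n) :
    ∫ z : Fin n → ℝ, z a * z b * z c * z d ∂(Measure.pi fun _ => gaussianReal 0 1)
      = (if a = b then (1:ℝ) else 0) * (if c = d then (1:ℝ) else 0)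
        + (if a = c then (1:ℝ) else 0) * (if b = d then (1:ℝ) else 0)
        + (if a = d then (1:ℝ) else 0) * (if b = c then (1:ℝ) else 0) := by
  simp only [rep_four]
  rw [integral_prod_pow]
  by_cases hab : a = b
  · subst hab
    by_cases hac : a = c
    · subst hac
      by_cases had : a = d
      · subst had
        refine (Finset.prod_eq_single a (fun t _ ht => by simp [Ne.symm ht, mom0])
          (fun h => absurd (Finset.mem_univ a) h)).trans ?_
        norm_num [mom4]
      · rw [Finset.prod_eq_zero (Finset.mem_univ d) (by simp [had, mom1'])]
        simp [had]
    · by_cases hcd : c = d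
      · subst hcd
        refine Finset.prod_eq_one (fun t _ => ?_) |>.trans ?_
        · by_cases h1 : a = t <;> by_cases h2 : c = t <;> simp_all [mom2, mom0]
        · simp [hac]
      · by_cases had : a = d
        · subst had
          rw [Finset.prod_eq_zero (Finset.mem_univ c) (by
            simp [hac, (Ne.symm hac : ¬ c = a), hcd, mom1'])]
          simp [hac, hcd, (Ne.symm hac : ¬ c = a)]
        · rw [Finset.prod_eq_zero (Finset.mem_univ c) (by
            simp [hac, (Ne.symm hcd : ¬ d = c), mom1'])]
          simp [hac, hcd, had]
  · by_cases hcd : c = d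
    · subst hcd
      by_cases hac : a = c
      · subst hac
        rw [Finset.prod_eq_zero (Finset.mem_univ b) (by
          simp [hab, mom1'])]
        simp [hab, (Ne.symm hab : ¬ b = a)]
      · by_cases hbc : b = c
        · subst hbc
          rw [Finset.prod_eq_zero (Finset.mem_univ a) (by
            simp [(Ne.symm hab : ¬ b = a), mom1'])]
          simp [hab, hac]
        · rw [Finset.prod_eq_zero (Finset.mem_univ a) (by
            simp [(Ne.symm hab : ¬ b = a), (Ne.symm hac : ¬ c = a), mom1'])]
          simp [hab, hac]
    · by_cases hac : a = c
      · subst hac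
        by_cases hbd : b = d
        · subst hbd
          refine Finset.prod_eq_one (fun t _ => ?_) |>.trans ?_
          · by_cases h1 : a = t <;> by_cases h2 : b = t <;> simp_all [mom2, mom0]
          · simp [hab, hcd]
        · rw [Finset.prod_eq_zero (Finset.mem_univ b) (by
            simp [hab, (Ne.symm hbd : ¬ d = b), mom1'])]
          simp [hab, hcd, hbd]
      · by_cases had : a = d
        · subst had
          by_cases hbc : b = c
          · subst hbc
            refine Finset.prod_eq_one (fun t _ => ?_) |>.trans ?_
            · by_cases h1 : a = t <;> by_cases h2 : b = t <;> simp_all [mom2, mom0]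
            · simp [hab, hac]
          · rw [Finset.prod_eq_zero (Finset.mem_univ b) (by
              simp [hab, (Ne.symm hbc : ¬ c = b), mom1'])]
            simp [hab, hac, hbc]
        · rw [Finset.prod_eq_zero (Finset.mem_univ a) (by
            simp [(Ne.symm hab : ¬ b = a), (Ne.symm hac : ¬ c = a), (Ne.symm had : ¬ d = a), mom1'])]
          simp [hab, hac, had]

lemma integrable_nu_four' {n : ℕ} (a b c d : Fin n) :
    Integrable (fun z : Fin n → ℝ => z a * z b * (z c * z d))
      (Measure.pi fun _ => gaussianReal 0 1) := by
  have := integrable_nu_four a b c d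
  simpa [mul_assoc] using this

lemma rep_matrix {q n : ℕ} (Z : Matrix (Fin q) (Fin n) ℝ) (i j : Fin q) (a b c d : Fin n) :
    Z i a * Z i b * (Z j c * Z j d)
      = ∏ k, ((if i = k then Z k a * Z k b else 1) * (if j = k then Z k c * Z k d else 1)) := by
  rw [Finset.prod_mul_distrib, Finset.prod_ite_eq, Finset.prod_ite_eq]
  simp

lemma matrix_mom {q n : ℕ} (i j : Fin q) (a b c d : Fin n) :
    ∫ Z, Z i a * Z i b * (Z j c * Z j d) ∂(stdGaussianMatrix q n)
      = (if a = b then (1:ℝ) else 0) * (if c = d then (1:ℝ) else 0)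
        + (if i = j then (1:ℝ) else 0) *
          ((if a = c then (1:ℝ) else 0) * (if b = d then (1:ℝ) else 0)
           + (if a = d then (1:ℝ) else 0) * (if b = c then (1:ℝ) else 0)) := by
  simp only [rep_matrix]
  have h : (∫ Z : Matrix (Fin q) (Fin n) ℝ,
      ∏ k, ((if i = k then Z k a * Z k b else 1) * (if j = k then Z k c * Z k d else 1))
        ∂(stdGaussianMatrix q n))
      = ∏ k, ∫ z : Fin n → ℝ, ((if i = k then z a * z b else 1) * (if j = k then z c * z d else 1))
          ∂(Measure.pi fun _ => gaussianReal 0 1) :=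
    by exact pi_integral_prod (E := Fin n → ℝ) (Measure.pi fun _ => gaussianReal 0 1)
        (fun k z => (if i = k then z a * z b else 1) * (if j = k then z c * z d else 1))
  rw [h]
  by_cases hij : i = j
  · subst hij
    simp only [eq_self_iff_true, if_true]
    refine (Finset.prod_eq_single i (fun k _ hk => by simp [Ne.symm hk]) 
      (fun hm => absurd (Finset.mem_univ i) hm)).trans ?_
    simp only [eq_self_iff_true, if_true]
    have : (fun z : Fin n → ℝ => z a * z b * (z c * z d)) = fun z => z a * z b * z c * z d := by
      funext z; ring
    calc ∫ z : Fin n → ℝ, z a * z b * (z c * z d) ∂(Measure.pi fun _ => gaussianReal 0 1)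
        = ∫ z : Fin n → ℝ, z a * z b * z c * z d ∂(Measure.pi fun _ => gaussianReal 0 1) := by
          rw [this]
      _ = _ := by rw [nu_mom4]; ring
  · rw [if_neg hij]
    have hone : ∀ k ∈ Finset.univ (α := Fin q), k ∉ ({i, j} : Finset (Fin q)) →
        (∫ z : Fin n → ℝ, ((if i = k then z a * z b else 1) * (if j = k then z c * z d else 1))
          ∂(Measure.pi fun _ => gaussianReal 0 1)) = 1 := by
      intro k _ hk
      simp only [Finset.mem_insert, Finset.mem_singleton, not_or] at hk
      simp [(Ne.symm hk.1 : ¬ i = k), (Ne.symm hk.2 : ¬ j = k)]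
    rw [← Finset.prod_subset (Finset.subset_univ ({i, j} : Finset (Fin q))) hone,
      Finset.prod_pair hij]
    rw [show (∫ z : Fin n → ℝ, ((if i = i then z a * z b else 1) * (if j = i then z c * z d else 1))
          ∂(Measure.pi fun _ => gaussianReal 0 1)) = if a = b then (1:ℝ) else 0 by
        simp [(Ne.symm hij : ¬ j = i)]; exact nu_mom2 a b]
    rw [show (∫ z : Fin n → ℝ, ((if i = j then z a * z b else 1) * (if j = j then z c * z d else 1))
          ∂(Measure.pi fun _ => gaussianReal 0 1)) = if c = d then (1:ℝ) else 0 by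
        simp [hij]; exact nu_mom2 c d]
    ring

lemma integrable_matrix_mono {q n : ℕ} (i j : Fin q) (a b c d : Fin n) :
    Integrable (fun Z : Matrix (Fin q) (Fin n) ℝ => Z i a * Z i b * (Z j c * Z j d))
      (stdGaussianMatrix q n) := by
  simp only [rep_matrix]
  have hint : ∀ k : Fin q, Integrable (fun z : Fin n → ℝ =>
      (if i = k then z a * z b else 1) * (if j = k then z c * z d else 1))
      (Measure.pi fun _ : Fin n => gaussianReal 0 1) := by
    intro k
    by_cases h1 : i = k <;> by_cases h2 : j = k
    · simpa [h1, h2] using integrable_nu_four' a b c d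
    · simpa [h1, h2] using integrable_nu_two a b
    · simpa [h1, h2] using integrable_nu_two c d
    · simpa [h1, h2] using (integrable_const (1:ℝ) (μ := Measure.pi fun _ : Fin n => gaussianReal 0 1))
  exact pi_integrable_prod (ι := Fin q) (E := Fin n → ℝ)
    (Measure.pi fun _ : Fin n => gaussianReal 0 1) hint

lemma trace_expand {n q : ℕ} (M N : Matrix (Fin n) (Fin n) ℝ) (Z : Matrix (Fin q) (Fin n) ℝ) :
    (Zᵀ * Z * M * (Zᵀ * Z) * N).trace
      = ∑ x : Fin n × Fin n × Fin n × Fin q × Fin n × Fin q,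
          (Z x.2.2.2.2.2 x.1 * Z x.2.2.2.2.2 x.2.2.2.2.1
            * (Z x.2.2.2.1 x.2.2.1 * Z x.2.2.2.1 x.2.1))
          * (M x.2.2.2.2.1 x.2.2.1 * N x.2.1 x.1) := by
  rw [Fintype.sum_prod_type]
  simp only [Fintype.sum_prod_type, Matrix.trace, Matrix.diag, Matrix.mul_apply,
    Matrix.transpose_apply, Finset.sum_mul, Finset.mul_sum]
  refine Finset.sum_congr rfl fun a _ => Finset.sum_congr rfl fun d _ =>
    Finset.sum_congr rfl fun c _ => Finset.sum_congr rfl fun j _ =>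
    Finset.sum_congr rfl fun b _ => Finset.sum_congr rfl fun i _ => by ring

lemma core_wishart {n q : ℕ} (M N : Matrix (Fin n) (Fin n) ℝ) :
    ∫ Z, (Zᵀ * Z * M * (Zᵀ * Z) * N).trace ∂(stdGaussianMatrix q n)
      = (q:ℝ)^2 * (M*N).trace + (q:ℝ) * (M*Nᵀ).trace + (q:ℝ) * (M.trace * N.trace) := by
  simp only [trace_expand]
  rw [integral_finset_sum _ (fun x _ => (integrable_matrix_mono _ _ _ _ _ _).mul_const _)]
  simp only [integral_mul_const, matrix_mom]
  rw [Fintype.sum_prod_type]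
  simp only [Fintype.sum_prod_type]
  have h1 : (M*N).trace = ∑ a, ∑ c, M a c * N c a := by
    simp [Matrix.trace, Matrix.diag, Matrix.mul_apply]
  have h2 : (M*Nᵀ).trace = ∑ b, ∑ a, M b a * N b a := by
    simp [Matrix.trace, Matrix.diag, Matrix.mul_apply, Matrix.transpose_apply]
  have h3 : M.trace * N.trace = ∑ a, ∑ b, M b b * N a a := by
    simp [Matrix.trace, Matrix.diag, Finset.sum_mul_sum, mul_comm]
    rw [Finset.sum_comm]
  rw [h1, h2, h3]
  simp only [add_mul, mul_ite, ite_mul, zero_mul, mul_zero, one_mul, mul_one,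
    Finset.sum_add_distrib, Finset.sum_ite_irrel, Finset.sum_const_zero, Finset.sum_ite_eq,
    Finset.sum_ite_eq', Finset.mem_univ, if_true,
    Finset.sum_const, Finset.card_univ, Fintype.card_fin, nsmul_eq_mul, Finset.mul_sum,
    Finset.sum_mul]
  ring_nf
  have hswap : (∑ x : Fin n, ∑ y : Fin n, (q:ℝ) * M y x * N y x)
      = ∑ x : Fin n, ∑ y : Fin n, (q:ℝ) * M x y * N x y := Finset.sum_comm
  rw [hswap]
  ring

end Aux

theorem stmt16 {n r q : ℕ} (hn : 0 < n) (hr : 0 < r) (hq : 0 < q)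
    (S : Matrix (Fin n) (Fin n) ℝ) (hS : S.PosDef)
    (G : Matrix (Fin n) (Fin n) ℝ) (H : Matrix (Fin n) (Fin r) ℝ) :
    ∫ Y, (Hᵀ * Yᵀ * Y * G * Gᵀ * Yᵀ * Y * H).trace ∂(gaussianRowsMatrix q n S hS)
      = (q : ℝ) * (S * G * Gᵀ).trace * (S * H * Hᵀ).trace
        + (q : ℝ) * ((q : ℝ) + 1) * (S * G * Gᵀ * S * H * Hᵀ).trace := by
  set R := ((hS.posSemidef.1.eigenvectorUnitary : Matrix (Fin n) (Fin n) ℝ) *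
    diagonal (Real.sqrt ∘ hS.posSemidef.1.eigenvalues) *
    (star hS.posSemidef.1.eigenvectorUnitary : Matrix (Fin n) (Fin n) ℝ)) with hRdef
  have hRsym : Rᵀ = R := by
    have hU : ((hS.posSemidef.1.eigenvectorUnitary : Matrix (Fin n) (Fin n) ℝ))ᵀ
        = (star hS.posSemidef.1.eigenvectorUnitary : Matrix (Fin n) (Fin n) ℝ) := by
      ext i j
      simp [Matrix.star_apply]
    rw [hRdef, Matrix.transpose_mul, Matrix.transpose_mul, Matrix.diagonal_transpose, hU,
      ← hU, Matrix.transpose_transpose, Matrix.mul_assoc]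
  have hRR : R * R = S := by
    have hsp := hS.posSemidef.1.spectral_theorem
    rw [Unitary.conjStarAlgAut_apply] at hsp
    have hUU : (star hS.posSemidef.1.eigenvectorUnitary : Matrix (Fin n) (Fin n) ℝ)
        * (hS.posSemidef.1.eigenvectorUnitary : Matrix (Fin n) (Fin n) ℝ) = 1 :=
      Unitary.coe_star_mul_self _
    have hD : diagonal (Real.sqrt ∘ hS.posSemidef.1.eigenvalues)
        * diagonal (Real.sqrt ∘ hS.posSemidef.1.eigenvalues)
        = diagonal (RCLike.ofReal ∘ hS.posSemidef.1.eigenvalues) := by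
      rw [Matrix.diagonal_mul_diagonal]
      congr 1
      funext i
      simp [Real.mul_self_sqrt (hS.posSemidef.eigenvalues_nonneg i)]
    conv_rhs => rw [hsp]
    rw [hRdef, ← hD]
    simp only [Matrix.mul_assoc]
    rw [← Matrix.mul_assoc (star _ : Matrix (Fin n) (Fin n) ℝ), hUU, Matrix.one_mul]
  clear_value R
  have hmeas : Measurable (fun Z : Matrix (Fin q) (Fin n) ℝ => Z * R) := by
    refine measurable_pi_lambda _ (fun i => measurable_pi_lambda _ (fun j => ?_))
    show Measurable fun Z : Matrix (Fin q) (Fin n) ℝ => ∑ k, Z i k * R k j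
    exact Finset.measurable_sum _ (fun k _ =>
      ((measurable_pi_apply k).comp (measurable_pi_apply i)).mul_const _)
  have hfmeas : Measurable (fun Y : Matrix (Fin q) (Fin n) ℝ =>
      (Hᵀ * Yᵀ * Y * G * Gᵀ * Yᵀ * Y * H).trace) := by
    simp only [Matrix.trace, Matrix.diag, Matrix.mul_apply, Matrix.transpose_apply,
      Finset.sum_mul, Finset.mul_sum]
    fun_prop
  rw [gaussianRowsMatrix, ← hRdef, integral_map hmeas.aemeasurable hfmeas.aestronglyMeasurable]
  have hpt : ∀ Z : Matrix (Fin q) (Fin n) ℝ,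
      (Hᵀ * (Z * R)ᵀ * (Z * R) * G * Gᵀ * (Z * R)ᵀ * (Z * R) * H).trace
        = (Zᵀ * Z * (R * (G * Gᵀ) * R) * (Zᵀ * Z) * (R * (H * Hᵀ) * R)).trace := by
    intro Z
    rw [show Hᵀ * (Z * R)ᵀ * (Z * R) * G * Gᵀ * (Z * R)ᵀ * (Z * R) * H
        = Hᵀ * ((Z * R)ᵀ * ((Z * R) * (G * (Gᵀ * ((Z * R)ᵀ * ((Z * R) * H)))))) from by
      simp only [Matrix.mul_assoc]]
    rw [Matrix.trace_mul_comm]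
    rw [show (Z * R)ᵀ * ((Z * R) * (G * (Gᵀ * ((Z * R)ᵀ * ((Z * R) * H))))) * Hᵀ
        = R * (Zᵀ * (Z * (R * (G * (Gᵀ * (R * (Zᵀ * (Z * (R * (H * Hᵀ)))))))))) from by
      simp only [Matrix.transpose_mul, hRsym, Matrix.mul_assoc]]
    rw [Matrix.trace_mul_comm]
    congr 1
    simp only [Matrix.mul_assoc]
  simp only [hpt]
  rw [core_wishart]
  set M := R * (G * Gᵀ) * R with hM
  set N := R * (H * Hᵀ) * R with hN
  have hNt : Nᵀ = N := by
    rw [hN]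
    rw [Matrix.transpose_mul, Matrix.transpose_mul, Matrix.transpose_mul, hRsym,
      Matrix.transpose_transpose]
    simp only [Matrix.mul_assoc]
  have hMtr : M.trace = (S * G * Gᵀ).trace := by
    rw [hM, Matrix.trace_mul_cycle, hRR]
    congr 1
    simp only [Matrix.mul_assoc]
  have hNtr : N.trace = (S * H * Hᵀ).trace := by
    rw [hN, Matrix.trace_mul_cycle, hRR]
    congr 1
    simp only [Matrix.mul_assoc]
  have hMN : (M * N).trace = (S * G * Gᵀ * S * H * Hᵀ).trace := by
    rw [show M * N = R * ((G * Gᵀ) * (R * R) * (H * Hᵀ)) * R from by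
      rw [hM, hN]; simp only [Matrix.mul_assoc]]
    rw [Matrix.trace_mul_cycle, hRR]
    congr 1
    simp only [Matrix.mul_assoc]
  rw [hNt, hMtr, hNtr, hMN]
  ring
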